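/- arXiv:2508.20872 — 5 statements merged into one kernel-verified Lean document; each statement's English description precedes it below -/
import Mathlib

section
/- Let (a_k), (b_k) be nonnegative real sequences with a_k ≤ a < 1 for all k and ∑ b_k < ∞, and let (C_k) be a real sequence satisfying C_{k+1} ≤ a_k C_k + b_k for all k ≥ 0. Then the series ∑_{k≥1} max(C_k, 0) converges. -/
/-- Lemma 6, part 1: if a_k ≤ a < 1, b summable nonnegative, and C_{k+1} ≤ a_k C_k + b_k,
then ∑_{k≥1} [C_k]₊ converges. -/
theorem stmt_2 (a b C : ℕ → ℝ) (A : ℝ)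
    (ha0 : ∀ k, 0 ≤ a k) (haA : ∀ k, a k ≤ A) (hA : A < 1)
    (hb0 : ∀ k, 0 ≤ b k) (hb : Summable b)
    (hC : ∀ k, C (k + 1) ≤ a k * C k + b k) :
    Summable (fun k => max (C (k + 1)) 0) := by
  set D : ℕ → ℝ := fun k => max (C k) 0 with hD
  have hA0 : 0 ≤ A := le_trans (ha0 0) (haA 0)
  have hDnn : ∀ k, 0 ≤ D k := fun k => le_max_right _ _
  have hstep : ∀ k, D (k + 1) ≤ A * D k + b k := by
    intro k
    have h1 : C (k + 1) ≤ A * D k + b k := by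
      calc C (k + 1) ≤ a k * C k + b k := hC k
        _ ≤ a k * D k + b k := by
            have := le_max_left (C k) 0
            nlinarith [ha0 k]
        _ ≤ A * D k + b k := by nlinarith [hDnn k, haA k]
    have h2 : (0 : ℝ) ≤ A * D k + b k := add_nonneg (mul_nonneg hA0 (hDnn k)) (hb0 k)
    exact max_le h1 h2
  have hBnn : 0 ≤ ∑' k, b k := tsum_nonneg hb0
  apply summable_of_sum_range_le (c := (A * D 0 + ∑' k, b k) / (1 - A))
    (fun n => hDnn (n + 1))
  intro n
  have hsum : ∑ k ∈ Finset.range n, D (k + 1)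
      ≤ A * (D 0 + ∑ k ∈ Finset.range n, D (k + 1)) + ∑' k, b k := by
    calc ∑ k ∈ Finset.range n, D (k + 1)
        ≤ ∑ k ∈ Finset.range n, (A * D k + b k) :=
          Finset.sum_le_sum fun k _ => hstep k
      _ = A * ∑ k ∈ Finset.range n, D k + ∑ k ∈ Finset.range n, b k := by
          rw [Finset.sum_add_distrib, Finset.mul_sum]
      _ ≤ A * (D 0 + ∑ k ∈ Finset.range n, D (k + 1)) + ∑' k, b k := by
          gcongr
          · calc ∑ k ∈ Finset.range n, D k
                ≤ ∑ k ∈ Finset.range (n + 1), D k :=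
                  Finset.sum_le_sum_of_subset_of_nonneg (by simp) fun i _ _ => hDnn i
              _ = D 0 + ∑ k ∈ Finset.range n, D (k + 1) := by
                  rw [Finset.sum_range_succ']; ring
          · exact Summable.sum_le_tsum _ (fun i _ => hb0 i) hb
  have h1A : (0 : ℝ) < 1 - A := by linarith
  rw [le_div_iff₀ h1A]
  nlinarith [hsum]
end

section
/- Let (a_k), (b_k) be nonnegative sequences with a_k ≤ a < 1 and ∑ b_k < ∞, let (C_k) satisfy C_{k+1} ≤ a_k C_k + b_k, and suppose C_k ≥ w_k − d·w_{k−1} for all k ≥ 1 where d ∈ [0,1) and (w_k) is a nonnegative sequence. Then ∑_{k≥0} w_k < ∞ (and in particular w_k → 0). -/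
/-- Lemma 6, part 3: additionally if C_k ≥ w_k − d w_{k−1} with d ∈ [0,1) and w nonnegative,
then ∑ w_k < ∞ (and hence w_k → 0). -/
theorem stmt_4 (a b C w : ℕ → ℝ) (A d : ℝ)
    (ha0 : ∀ k, 0 ≤ a k) (haA : ∀ k, a k ≤ A) (hA : A < 1)
    (hb0 : ∀ k, 0 ≤ b k) (hb : Summable b)
    (hC : ∀ k, C (k + 1) ≤ a k * C k + b k)
    (hd0 : 0 ≤ d) (hd1 : d < 1)
    (hw0 : ∀ k, 0 ≤ w k)
    (hCw : ∀ k ≥ 1, w k - d * w (k - 1) ≤ C k) :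
    Summable w ∧ Filter.Tendsto w Filter.atTop (nhds 0) := by
  have hA0 : (0:ℝ) ≤ A := le_trans (ha0 0) (haA 0)
  set g : ℕ → ℝ := fun k => max (C k) 0 with hg
  have hg0 : ∀ k, 0 ≤ g k := fun k => le_max_right _ _
  have hgrec : ∀ k, g (k + 1) ≤ A * g k + b k := by
    intro k
    have h1 : C (k + 1) ≤ A * g k + b k := by
      have : a k * C k ≤ A * g k := by
        calc a k * C k ≤ a k * g k := by
              exact mul_le_mul_of_nonneg_left (le_max_left _ _) (ha0 k)
          _ ≤ A * g k := mul_le_mul_of_nonneg_right (haA k) (hg0 k)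
      linarith [hC k]
    have h2 : (0:ℝ) ≤ A * g k + b k :=
      add_nonneg (mul_nonneg hA0 (hg0 k)) (hb0 k)
    exact max_le h1 h2
  have hB : ∀ n, ∑ i ∈ Finset.range n, b i ≤ ∑' i, b i := fun n =>
    Summable.sum_le_tsum _ (fun i _ => hb0 i) hb
  -- Summability of g via bounded partial sums
  have hgsum : Summable g := by
    apply summable_of_sum_range_le hg0 (c := (g 0 + ∑' i, b i) / (1 - A))
    intro n
    have hnum : 0 ≤ g 0 + ∑' i, b i := add_nonneg (hg0 0) (tsum_nonneg hb0)
    have h1A : 0 < 1 - A := by linarith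
    rcases n with _ | m
    · simp; positivity
    · have hmono : ∑ i ∈ Finset.range m, g i ≤ ∑ i ∈ Finset.range (m+1), g i := by
        rw [Finset.sum_range_succ]; linarith [hg0 m]
      have hstep : ∑ i ∈ Finset.range (m+1), g i
          ≤ g 0 + A * ∑ i ∈ Finset.range m, g i + ∑' i, b i := by
        rw [Finset.sum_range_succ']
        have : ∑ i ∈ Finset.range m, g (i+1)
            ≤ ∑ i ∈ Finset.range m, (A * g i + b i) :=
          Finset.sum_le_sum (fun i _ => hgrec i)
        rw [Finset.sum_add_distrib, ← Finset.mul_sum] at this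
        linarith [hB m]
      have key : (1 - A) * ∑ i ∈ Finset.range (m+1), g i ≤ g 0 + ∑' i, b i := by
        nlinarith [hmono, hstep]
      rw [le_div_iff₀ h1A]
      linarith [key]
  have hG : ∀ n, ∑ i ∈ Finset.range n, g (i+1) ≤ ∑' i, g i := by
    intro n
    have : ∑ i ∈ Finset.range n, g (i+1) ≤ ∑ i ∈ Finset.range (n+1), g i := by
      rw [Finset.sum_range_succ']; linarith [hg0 0]
    exact this.trans (Summable.sum_le_tsum _ (fun i _ => hg0 i) hgsum)
  -- Summability of w via bounded partial sums
  have hwsum : Summable w := by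
    apply summable_of_sum_range_le hw0 (c := (w 0 + ∑' i, g i) / (1 - d))
    intro n
    have hnum : 0 ≤ w 0 + ∑' i, g i := add_nonneg (hw0 0) (tsum_nonneg hg0)
    have h1d : 0 < 1 - d := by linarith
    rcases n with _ | m
    · simp; positivity
    · have hmono : ∑ i ∈ Finset.range m, w i ≤ ∑ i ∈ Finset.range (m+1), w i := by
        rw [Finset.sum_range_succ]; linarith [hw0 m]
      have hstep : ∑ i ∈ Finset.range (m+1), w i
          ≤ w 0 + d * ∑ i ∈ Finset.range m, w i + ∑' i, g i := by
        rw [Finset.sum_range_succ']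
        have hrec : ∀ i, w (i+1) ≤ g (i+1) + d * w i := by
          intro i
          have := hCw (i+1) (Nat.le_add_left 1 i)
          simp only [Nat.add_sub_cancel] at this
          have hle : C (i+1) ≤ g (i+1) := le_max_left _ _
          linarith
        have : ∑ i ∈ Finset.range m, w (i+1)
            ≤ ∑ i ∈ Finset.range m, (g (i+1) + d * w i) :=
          Finset.sum_le_sum (fun i _ => hrec i)
        rw [Finset.sum_add_distrib, ← Finset.mul_sum] at this
        linarith [hG m]
      have key : (1 - d) * ∑ i ∈ Finset.range (m+1), w i ≤ w 0 + ∑' i, g i := by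
        nlinarith [hmono, hstep]
      rw [le_div_iff₀ h1d]
      linarith [key]
  exact ⟨hwsum, hwsum.tendsto_atTop_zero⟩
end

section
/- Let A be maximally monotone on H and let Φ : H → H be α-strongly monotone and L-Lipschitz with α, L > 0. For γ > 0 define the merit map G^γ(v) = (1/γ)[v − J_{γA}(v − γΦ(v))], where J_{γA} = (Id + γA)^{−1} is the resolvent, and let ū be the unique zero of A + Φ. Then for all v ∈ H, ‖v − ū‖ ≤ ((1 + γL)/α)‖G^γ(v)‖. -/
open RealInnerProductSpace

/-- A set-valued operator is monotone. -/
def MonotoneOp {H : Type*} [NormedAddCommGroup H] [InnerProductSpace ℝ H]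
    (A : H → Set H) : Prop :=
  ∀ ⦃x y a b : H⦄, a ∈ A x → b ∈ A y → 0 ≤ ⟪a - b, x - y⟫

/-- A set-valued operator is maximally monotone. -/
def MaxMonotoneOp {H : Type*} [NormedAddCommGroup H] [InnerProductSpace ℝ H]
    (A : H → Set H) : Prop :=
  MonotoneOp A ∧ ∀ B : H → Set H, MonotoneOp B → (∀ x, A x ⊆ B x) → ∀ x, B x = A x

/-- Lemma 3 (merit function bound): if J is the resolvent of γA, Φ is α-strongly monotone and
L-Lipschitz, ū the unique zero of A + Φ, and Gγ(v) = (1/γ)(v − J(v − γΦ(v))), then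
‖v − ū‖ ≤ ((1+γL)/α)‖Gγ(v)‖. -/
theorem stmt_9 {H : Type*} [NormedAddCommGroup H] [InnerProductSpace ℝ H] [CompleteSpace H]
    (A : H → Set H) (hA : MaxMonotoneOp A)
    (Φ : H → H) (α L : ℝ) (hα : 0 < α) (hL : 0 < L)
    (hΦstrong : ∀ v v', α * ‖v - v'‖ ^ 2 ≤ ⟪Φ v - Φ v', v - v'⟫)
    (hΦlip : ∀ v v', ‖Φ v - Φ v'‖ ≤ L * ‖v - v'‖)
    (γ : ℝ) (hγ : 0 < γ)
    (J : H → H) (hJ : ∀ x, (1 / γ) • (x - J x) ∈ A (J x))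
    (ubar : H) (hubar : -Φ ubar ∈ A ubar)
    (Gγ : H → H) (hGγ : ∀ v, Gγ v = (1 / γ) • (v - J (v - γ • Φ v))) :
    ∀ v : H, ‖v - ubar‖ ≤ ((1 + γ * L) / α) * ‖Gγ v‖ := by
  intro v
  set u := J (v - γ • Φ v) with hu
  set g := Gγ v with hg
  have hγ' : γ ≠ 0 := ne_of_gt hγ
  have hvu : v - u = γ • g := by
    rw [hg, hGγ v, smul_smul]
    field_simp
    rw [one_smul]
  have hmem : g - Φ v ∈ A u := by
    have h := hJ (v - γ • Φ v)
    have : (1 / γ) • (v - γ • Φ v - u) = g - Φ v := by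
      rw [hg, hGγ v]
      rw [show v - γ • Φ v - J (v - γ • Φ v) = (v - J (v - γ • Φ v)) - γ • Φ v by abel]
      rw [smul_sub, smul_smul]
      field_simp
      rw [one_smul]
    rwa [this] at h
  have hmono := hA.1 hmem hubar
  -- 0 ≤ ⟪g - Φ v - (-Φ ubar), u - ubar⟫
  have key : α * ‖v - ubar‖ ^ 2 ≤ (1 + γ * L) * ‖g‖ * ‖v - ubar‖ := by
    have h1 : α * ‖v - ubar‖ ^ 2 ≤ ⟪Φ v - Φ ubar, v - ubar⟫ := hΦstrong v ubar
    have hsplit : ⟪Φ v - Φ ubar, v - ubar⟫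
        = ⟪Φ v - Φ ubar, v - u⟫ + ⟪Φ v - Φ ubar, u - ubar⟫ := by
      rw [← inner_add_right]
      congr 1
      abel
    have h2 : ⟪Φ v - Φ ubar, u - ubar⟫ ≤ ⟪g, u - ubar⟫ := by
      have : ⟪g - Φ v - -Φ ubar, u - ubar⟫ = ⟪g, u - ubar⟫ - ⟪Φ v - Φ ubar, u - ubar⟫ := by
        rw [show g - Φ v - -Φ ubar = g - (Φ v - Φ ubar) by abel, inner_sub_left]
      linarith [hmono, this ▸ hmono]
    have hue : u - ubar = (v - ubar) - γ • g := by
      rw [← hvu]; abel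
    have h3 : ⟪g, u - ubar⟫ = ⟪g, v - ubar⟫ - γ * ‖g‖ ^ 2 := by
      rw [hue, inner_sub_right, inner_smul_right, real_inner_self_eq_norm_sq]
    have h4 : ⟪Φ v - Φ ubar, v - u⟫ = γ * ⟪Φ v - Φ ubar, g⟫ := by
      rw [hvu, inner_smul_right]
    have h5 : ⟪Φ v - Φ ubar, g⟫ ≤ L * ‖v - ubar‖ * ‖g‖ := by
      calc ⟪Φ v - Φ ubar, g⟫ ≤ ‖Φ v - Φ ubar‖ * ‖g‖ := real_inner_le_norm _ _
        _ ≤ L * ‖v - ubar‖ * ‖g‖ := by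
            apply mul_le_mul_of_nonneg_right (hΦlip v ubar) (norm_nonneg _)
    have h6 : ⟪g, v - ubar⟫ ≤ ‖g‖ * ‖v - ubar‖ := real_inner_le_norm _ _
    have hγg : 0 ≤ γ * ‖g‖ ^ 2 := by positivity
    nlinarith [h1, hsplit, h2, h3, h4, h5, h6]
  rcases eq_or_lt_of_le (norm_nonneg (v - ubar)) with h0 | h0
  · rw [← h0]
    positivity
  · rw [div_mul_eq_mul_div, le_div_iff₀ hα]
    nlinarith [key]
end

section
/- Let T : H → H be a q-contraction with q ∈ (0,1) and fixed point ū. Consider the exact relaxed-inertial iteration z^k = v^k + τ_k(v^k − v^{k−1}), v^{k+1} = (1−θ_k)z^k + θ_k T(z^k), where θ_k ∈ [θ_min, θ_max] ⊂ (0,1), (τ_k) ⊂ [0, τ̄] with τ̄ < 1 monotonically increasing, and the parameter inequality Q_k τ_k(1+τ_k) + λ_k τ_k(1−τ_k) − Q_k λ_{k−1}(1−τ_{k−1}) ≤ 0 holds for all k, where Q_k = 1 − θ_k + 2θ_k q² and λ_k = (1−θ_k)/θ_k, and assume Q_k < 1 uniformly. Then v^k → ū strongly and ∑_k ‖v^k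 − ū‖² < ∞. -/
set_option maxHeartbeats 1000000
open Filter

private lemma sq_ident1 {H : Type*} [NormedAddCommGroup H] [InnerProductSpace ℝ H]
    (a b : H) (t : ℝ) :
    ‖(1-t)•a + t•b‖^2 = (1-t)*‖a‖^2 + t*‖b‖^2 - t*(1-t)*‖a-b‖^2 := by
  have e : ∀ u : H, ‖u‖^2 = (inner ℝ u u : ℝ) := fun u => (real_inner_self_eq_norm_sq u).symm
  rw [e, e, e, e]
  simp only [inner_add_left, inner_add_right, inner_sub_left, inner_sub_right,
    real_inner_smul_left, real_inner_smul_right, real_inner_comm a b]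
  ring

private lemma sq_ident2 {H : Type*} [NormedAddCommGroup H] [InnerProductSpace ℝ H]
    (x y : H) (t : ℝ) :
    ‖x + t•(x-y)‖^2 = (1+t)*‖x‖^2 - t*‖y‖^2 + t*(1+t)*‖x-y‖^2 := by
  have e : ∀ u : H, ‖u‖^2 = (inner ℝ u u : ℝ) := fun u => (real_inner_self_eq_norm_sq u).symm
  rw [e, e, e, e]
  simp only [inner_add_left, inner_add_right, inner_sub_left, inner_sub_right,
    real_inner_smul_left, real_inner_smul_right, real_inner_comm x y]
  ring

private lemma sq_ident3 {H : Type*} [NormedAddCommGroup H] [InnerProductSpace ℝ H]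
    (x y : H) (t : ℝ) :
    ‖x - t•y‖^2 = (1-t)*‖x‖^2 - t*(1-t)*‖y‖^2 + t*‖x-y‖^2 := by
  have e : ∀ u : H, ‖u‖^2 = (inner ℝ u u : ℝ) := fun u => (real_inner_self_eq_norm_sq u).symm
  rw [e, e, e, e]
  simp only [inner_add_left, inner_add_right, inner_sub_left, inner_sub_right,
    real_inner_smul_left, real_inner_smul_right, real_inner_comm x y]
  ring

private lemma step_ineq {H : Type*} [NormedAddCommGroup H] [InnerProductSpace ℝ H]
    (T : H → H) (q : ℝ) (hq0 : 0 ≤ q)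
    (θk τk τp lamk lamp Qk : ℝ)
    (hθ0 : 0 < θk) (hθ1 : θk < 1) (hτk0 : 0 ≤ τk)
    (hlamk : lamk = (1 - θk) / θk) (hQk : Qk = 1 - θk + 2 * θk * q ^ 2)
    (hpar : Qk * τk * (1 + τk) + lamk * τk * (1 - τk) - Qk * lamp * (1 - τp) ≤ 0)
    (ubar vp vk vk1 zk : H)
    (hTz : ‖T zk - ubar‖ ≤ q * ‖zk - ubar‖)
    (hzdef : zk = vk + τk • (vk - vp))
    (hvdef : vk1 = (1 - θk) • zk + θk • T zk) :
    ‖vk1 - ubar‖ ^ 2 + lamk * (1 - τk) * ‖vk1 - vk‖ ^ 2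
      ≤ Qk * ((1 + τk) * ‖vk - ubar‖ ^ 2 - τk * ‖vp - ubar‖ ^ 2
          + lamp * (1 - τp) * ‖vk - vp‖ ^ 2) := by
  have hθne : θk ≠ 0 := ne_of_gt hθ0
  have hlamnn : 0 ≤ lamk := by rw [hlamk]; exact div_nonneg (by linarith) hθ0.le
  have hv1 : vk1 - ubar = (1-θk) • (zk - ubar) + θk • (T zk - ubar) := by rw [hvdef]; module
  have E1 : ‖vk1 - ubar‖^2 = (1-θk)*‖zk-ubar‖^2 + θk*‖T zk - ubar‖^2
      - θk*(1-θk)*‖(zk-ubar) - (T zk - ubar)‖^2 := by rw [hv1, sq_ident1]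
  have hzT : (zk - ubar) - (T zk - ubar) = zk - T zk := by abel
  rw [hzT] at E1
  have hv3 : vk1 - zk = θk • (T zk - zk) := by rw [hvdef]; module
  have EW : lamk * ‖vk1 - zk‖^2 = θk*(1-θk)*‖zk - T zk‖^2 := by
    rw [hv3, norm_smul, Real.norm_eq_abs, abs_of_pos hθ0, mul_pow, hlamk,
      norm_sub_rev (T zk) zk]
    field_simp
  have E1' : ‖vk1 - ubar‖^2 = (1-θk)*‖zk-ubar‖^2 + θk*‖T zk - ubar‖^2
      - lamk * ‖vk1 - zk‖^2 := by rw [E1, EW]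
  have EZ : ‖zk - ubar‖^2 = (1+τk)*‖vk-ubar‖^2 - τk*‖vp-ubar‖^2
      + τk*(1+τk)*‖vk - vp‖^2 := by
    have h1 : zk - ubar = (vk - ubar) + τk • ((vk - ubar) - (vp - ubar)) := by
      rw [hzdef]; module
    rw [h1, sq_ident2, sub_sub_sub_cancel_right]
  have hv4 : vk1 - zk = (vk1 - vk) - τk • (vk - vp) := by rw [hzdef]; module
  have EV : ‖vk1 - zk‖^2 = (1-τk)*‖vk1-vk‖^2 - τk*(1-τk)*‖vk-vp‖^2
      + τk*‖(vk1-vk) - (vk-vp)‖^2 := by rw [hv4, sq_ident3]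
  have hTz2 : ‖T zk - ubar‖^2 ≤ q^2 * ‖zk - ubar‖^2 := by
    have h := mul_self_le_mul_self (norm_nonneg (T zk - ubar)) hTz
    nlinarith [norm_nonneg (T zk - ubar), norm_nonneg (zk - ubar)]
  have F2 : θk * ‖T zk - ubar‖^2 ≤ θk * (q^2 * ‖zk - ubar‖^2) :=
    mul_le_mul_of_nonneg_left hTz2 hθ0.le
  have hZnn : (0:ℝ) ≤ ‖zk - ubar‖^2 := sq_nonneg _
  have F6 : (1 - θk + θk*q^2) * ‖zk-ubar‖^2 ≤ Qk * ‖zk-ubar‖^2 := by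
    rw [hQk]
    have h9 : (0:ℝ) ≤ θk*q^2*‖zk-ubar‖^2 := mul_nonneg (mul_nonneg hθ0.le (sq_nonneg q)) hZnn
    nlinarith [h9]
  have F3 : Qk * ‖zk-ubar‖^2 = Qk * ((1+τk)*‖vk-ubar‖^2 - τk*‖vp-ubar‖^2
      + τk*(1+τk)*‖vk - vp‖^2) := by rw [EZ]
  have hle : (1-τk)*‖vk1-vk‖^2 - τk*(1-τk)*‖vk-vp‖^2 ≤ ‖vk1 - zk‖^2 := by
    rw [EV]
    nlinarith [mul_nonneg hτk0 (sq_nonneg ‖(vk1-vk) - (vk-vp)‖)]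
  have F4 : lamk * ((1-τk)*‖vk1-vk‖^2 - τk*(1-τk)*‖vk-vp‖^2) ≤ lamk * ‖vk1 - zk‖^2 :=
    mul_le_mul_of_nonneg_left hle hlamnn
  have F7 : (Qk*τk*(1+τk) + lamk*τk*(1-τk)) * ‖vk-vp‖^2
      ≤ (Qk*lamp*(1-τp)) * ‖vk-vp‖^2 :=
    mul_le_mul_of_nonneg_right (by linarith) (sq_nonneg _)
  linarith [E1', F2, F6, F3, F4, F7]



/-- Theorem 1 (exact case): the relaxed-inertial fixed point iteration for a q-contraction T
converges strongly to the fixed point ū, with ∑ ‖v^k − ū‖² < ∞. -/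
theorem stmt_12 {H : Type*} [NormedAddCommGroup H] [InnerProductSpace ℝ H] [CompleteSpace H]
    (T : H → H) (q : ℝ) (hq0 : 0 < q) (hq1 : q < 1)
    (hT : ∀ x y, ‖T x - T y‖ ≤ q * ‖x - y‖)
    (ubar : H) (hfix : T ubar = ubar)
    (θ τ : ℕ → ℝ) (θmin θmax τbar Qbar : ℝ)
    (hθmin : 0 < θmin) (hθmax : θmax < 1)
    (hθ : ∀ k, θ k ∈ Set.Icc θmin θmax)
    (hτ0 : ∀ k, 0 ≤ τ k) (hτub : ∀ k, τ k ≤ τbar) (hτbar : τbar < 1)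
    (hτmono : Monotone τ)
    (Q lam : ℕ → ℝ)
    (hQ : ∀ k, Q k = 1 - θ k + 2 * θ k * q ^ 2)
    (hlam : ∀ k, lam k = (1 - θ k) / θ k)
    (hparam : ∀ k ≥ 1,
      Q k * τ k * (1 + τ k) + lam k * τ k * (1 - τ k)
        - Q k * lam (k - 1) * (1 - τ (k - 1)) ≤ 0)
    (hQbar : Qbar < 1) (hQb : ∀ k, Q k ≤ Qbar)
    (v z : ℕ → H)
    (hinit : v 0 = v 1)
    (hz : ∀ k ≥ 1, z k = v k + τ k • (v k - v (k - 1)))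
    (hv : ∀ k ≥ 1, v (k + 1) = (1 - θ k) • z k + θ k • T (z k)) :
    Filter.Tendsto v Filter.atTop (nhds ubar) ∧
      Summable (fun k => ‖v k - ubar‖ ^ 2) := by
  have hθpos : ∀ k, 0 < θ k := fun k => lt_of_lt_of_le hθmin (hθ k).1
  have hθlt : ∀ k, θ k < 1 := fun k => lt_of_le_of_lt (hθ k).2 hθmax
  have hτlt : ∀ k, τ k < 1 := fun k => lt_of_le_of_lt (hτub k) hτbar
  have hτbar0 : (0:ℝ) ≤ τbar := le_trans (hτ0 0) (hτub 0)
  have hQpos : ∀ k, 0 < Q k := by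
    intro k; rw [hQ k]
    nlinarith [hθpos k, hθlt k, sq_nonneg q]
  have hQlt : ∀ k, Q k < 1 := fun k => lt_of_le_of_lt (hQb k) hQbar
  have hlamnn : ∀ k, 0 ≤ lam k := by
    intro k; rw [hlam k]
    exact div_nonneg (by linarith [hθlt k]) (hθpos k).le
  have hQbar0 : 0 < Qbar := lt_of_lt_of_le (hQpos 0) (hQb 0)
  -- the one-step inequality
  have key : ∀ m : ℕ, ‖v (m+2) - ubar‖^2
      + lam (m+1) * (1 - τ (m+1)) * ‖v (m+2) - v (m+1)‖^2
      ≤ Q (m+1) * ((1 + τ (m+1)) * ‖v (m+1) - ubar‖^2 - τ (m+1) * ‖v m - ubar‖^2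
          + lam m * (1 - τ m) * ‖v (m+1) - v m‖^2) := by
    intro m
    have hp := hparam (m+1) (Nat.le_add_left 1 m)
    simp only [Nat.add_sub_cancel] at hp
    have hzz := hz (m+1) (Nat.le_add_left 1 m)
    simp only [Nat.add_sub_cancel] at hzz
    have hvv := hv (m+1) (Nat.le_add_left 1 m)
    have hTz : ‖T (z (m+1)) - ubar‖ ≤ q * ‖z (m+1) - ubar‖ := by
      have h := hT (z (m+1)) ubar; rwa [hfix] at h
    exact step_ineq T q hq0.le (θ (m+1)) (τ (m+1)) (τ m) (lam (m+1)) (lam m) (Q (m+1))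
      (hθpos _) (hθlt _) (hτ0 _) (hlam _) (hQ _) hp ubar (v m) (v (m+1)) (v (m+2))
      (z (m+1)) hTz hzz hvv
  -- Lyapunov function
  set Φf : ℕ → ℝ := fun m => ‖v (m+1) - ubar‖^2 - τ (m+1) * ‖v m - ubar‖^2
      + lam m * (1 - τ m) * ‖v (m+1) - v m‖^2 with hΦf
  have hΦrec : ∀ m, Φf (m+1) ≤ Q (m+1) * Φf m := by
    intro m
    simp only [hΦf, show m+1+1 = m+2 from rfl]
    have h1 := key m
    have h2 : Q (m+1) * τ (m+1) * ‖v (m+1) - ubar‖^2 ≤ τ (m+2) * ‖v (m+1) - ubar‖^2 := by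
      have h3 : Q (m+1) * τ (m+1) ≤ τ (m+2) := by
        have h4 : Q (m+1) * τ (m+1) ≤ τ (m+1) := by
          nlinarith [hτ0 (m+1), hQpos (m+1), hQlt (m+1)]
        exact le_trans h4 (hτmono (by omega))
      exact mul_le_mul_of_nonneg_right h3 (sq_nonneg _)
    nlinarith [h1, h2]
  set C := max (Φf 0) 0 with hC
  have hC0 : 0 ≤ C := le_max_right _ _
  have hΨ : ∀ m, max (Φf m) 0 ≤ C * Qbar ^ m := by
    intro m
    induction m with
    | zero => simp [hC]
    | succ n ih =>
      have h1 : max (Φf (n+1)) 0 ≤ Qbar * max (Φf n) 0 := by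
        have hmn : (0:ℝ) ≤ Qbar * max (Φf n) 0 :=
          mul_nonneg hQbar0.le (le_max_right _ _)
        rcases le_or_gt 0 (Φf n) with h | h
        · refine max_le ?_ hmn
          calc Φf (n+1) ≤ Q (n+1) * Φf n := hΦrec n
            _ ≤ Qbar * Φf n := mul_le_mul_of_nonneg_right (hQb _) h
            _ = Qbar * max (Φf n) 0 := by rw [max_eq_left h]
        · refine max_le ?_ hmn
          have h5 : Φf (n+1) ≤ 0 := by
            have h6 := hΦrec n
            nlinarith [hQpos (n+1)]
          linarith
      calc max (Φf (n+1)) 0 ≤ Qbar * max (Φf n) 0 := h1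
        _ ≤ Qbar * (C * Qbar ^ n) := mul_le_mul_of_nonneg_left ih hQbar0.le
        _ = C * Qbar ^ (n+1) := by rw [pow_succ]; ring
  have haux : ∀ m, ‖v (m+1) - ubar‖^2 ≤ τbar * ‖v m - ubar‖^2 + max (Φf m) 0 := by
    intro m
    have h1 : 0 ≤ lam m * (1 - τ m) * ‖v (m+1) - v m‖^2 :=
      mul_nonneg (mul_nonneg (hlamnn m) (by linarith [hτlt m])) (sq_nonneg _)
    have h2 : Φf m ≤ max (Φf m) 0 := le_max_left _ _
    have h3 : τ (m+1) * ‖v m - ubar‖^2 ≤ τbar * ‖v m - ubar‖^2 :=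
      mul_le_mul_of_nonneg_right (hτub _) (sq_nonneg _)
    simp only [hΦf] at h2
    linarith
  set A1 := ‖v 1 - ubar‖^2 with hA1
  set r := max τbar Qbar with hr
  have hr0 : 0 ≤ r := le_trans hτbar0 (le_max_left _ _)
  have hr1 : r < 1 := max_lt hτbar hQbar
  have hmain : ∀ m, ‖v (m+1) - ubar‖^2 ≤ (A1 + C*m) * r^m := by
    intro m
    induction m with
    | zero => simp [hA1]
    | succ n ih =>
      have h1 := haux (n+1)
      have h2 := hΨ (n+1)
      have h3 : Qbar ^ (n+1) ≤ r ^ (n+1) := pow_le_pow_left₀ hQbar0.le (le_max_right _ _) _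
      have h4 : τbar * ‖v (n+1) - ubar‖^2 ≤ r * ((A1 + C*n) * r^n) :=
        mul_le_mul (le_max_left _ _) ih (sq_nonneg _) hr0
      have h5 : max (Φf (n+1)) 0 ≤ C * r^(n+1) :=
        le_trans h2 (mul_le_mul_of_nonneg_left h3 hC0)
      push_cast
      calc ‖v (n+1+1) - ubar‖^2 ≤ τbar * ‖v (n+1) - ubar‖^2 + max (Φf (n+1)) 0 := h1
        _ ≤ r * ((A1 + C*n) * r^n) + C * r^(n+1) := add_le_add h4 h5
        _ = (A1 + C*(n+1)) * r^(n+1) := by rw [pow_succ]; ring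
  have hsum1 : Summable (fun m : ℕ => (A1 + C * m) * r ^ m) := by
    have h1 : Summable (fun m : ℕ => A1 * r ^ m) :=
      (summable_geometric_of_lt_one hr0 hr1).mul_left A1
    have h2 : Summable (fun m : ℕ => (m:ℝ) * r ^ m) := by
      have h := summable_pow_mul_geometric_of_norm_lt_one 1
        (r := r) (by rw [Real.norm_eq_abs, abs_of_nonneg hr0]; exact hr1)
      simpa using h
    exact (h1.add (h2.mul_left C)).congr (fun m => by ring)
  have hsum2 : Summable (fun m : ℕ => ‖v (m+1) - ubar‖^2) :=
    Summable.of_nonneg_of_le (fun m => sq_nonneg _) hmain hsum1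
  have hsum : Summable (fun k => ‖v k - ubar‖^2) :=
    (summable_nat_add_iff 1).mp hsum2
  refine ⟨?_, hsum⟩
  have ht := hsum.tendsto_atTop_zero
  have ht2 : Filter.Tendsto (fun k => ‖v k - ubar‖) Filter.atTop (nhds 0) := by
    have h := (Real.continuous_sqrt.tendsto 0).comp ht
    rw [Real.sqrt_zero] at h
    exact h.congr (fun k => Real.sqrt_sq (norm_nonneg _))
  exact tendsto_iff_norm_sub_tendsto_zero.mpr ht2
end

section
/- Let T : H → H be a q-contraction with fixed point ū, (δ_k) a perturbation sequence and (θ_k) ⊂ [θ_min, θ_max] ⊂ (0,1) with ∑_k θ_k‖δ_k‖² < ∞. With iterates z^k = v^k + τ_k(v^k − v^{k−1}), v^{k+1} = (1−θ_k)z^k + θ_k(T(z^k) + δ_k), (τ_k) monotonically increasing in [0, τ̄], τ̄ < 1, and with Q_k = 1−θ_k+2θ_k q², λ_k = (1−θ_k)/θ_k satisfying Q_k τ_k(1+τ_k) + λ_k τ_k(1−τ_k) − Q_k λ_{k−1}(1−τ_{k−1}) ≤ 0 and Q_k ≤ Q̄ < 1, the energy V_k = ‖v^k − ū‖² − τ_{k−1}‖v^{k−1}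 − ū‖² + λ_{k−1}(1−τ_{k−1})‖v^k − v^{k−1}‖² satisfies V_{k+1} ≤ Q_k V_k + 2θ_k‖δ_k‖² for all k ≥ 1. -/
open RealInnerProductSpace


lemma comb_aux {H : Type*} [NormedAddCommGroup H] [InnerProductSpace ℝ H] (t : ℝ) (a b : H) :
    ‖(1-t)•a + t•b‖^2 = (1-t)*‖a‖^2 + t*‖b‖^2 - t*(1-t)*‖a-b‖^2 := by
  have e : ∀ x : H, ‖x‖^2 = ⟪x, x⟫ := fun x => (real_inner_self_eq_norm_sq x).symm
  simp only [e, inner_add_add_self, inner_sub_sub_self,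
    real_inner_smul_left, real_inner_smul_right, real_inner_comm b a]
  ring


/-- Key energy estimate in Theorem 1 (inexact case): with
V_k = ‖v^k − ū‖² − τ_{k−1}‖v^{k−1} − ū‖² + λ_{k−1}(1−τ_{k−1})‖v^k − v^{k−1}‖²,
one has V_{k+1} ≤ Q_k V_k + 2θ_k‖δ_k‖² for all k ≥ 1. -/
theorem stmt_13 {H : Type*} [NormedAddCommGroup H] [InnerProductSpace ℝ H] [CompleteSpace H]
    (T : H → H) (q : ℝ) (hq0 : 0 < q) (hq1 : q < 1)
    (hT : ∀ x y, ‖T x - T y‖ ≤ q * ‖x - y‖)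
    (ubar : H) (hfix : T ubar = ubar)
    (δ : ℕ → H)
    (θ τ : ℕ → ℝ) (θmin θmax τbar Qbar : ℝ)
    (hθmin : 0 < θmin) (hθmax : θmax < 1)
    (hθ : ∀ k, θ k ∈ Set.Icc θmin θmax)
    (hδ : Summable (fun k => θ k * ‖δ k‖ ^ 2))
    (hτ0 : ∀ k, 0 ≤ τ k) (hτub : ∀ k, τ k ≤ τbar) (hτbar : τbar < 1)
    (hτmono : Monotone τ)
    (Q lam : ℕ → ℝ)
    (hQ : ∀ k, Q k = 1 - θ k + 2 * θ k * q ^ 2)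
    (hlam : ∀ k, lam k = (1 - θ k) / θ k)
    (hparam : ∀ k ≥ 1,
      Q k * τ k * (1 + τ k) + lam k * τ k * (1 - τ k)
        - Q k * lam (k - 1) * (1 - τ (k - 1)) ≤ 0)
    (hQbar : Qbar < 1) (hQb : ∀ k, Q k ≤ Qbar)
    (v z : ℕ → H)
    (hz : ∀ k ≥ 1, z k = v k + τ k • (v k - v (k - 1)))
    (hv : ∀ k ≥ 1, v (k + 1) = (1 - θ k) • z k + θ k • (T (z k) + δ k))
    (V : ℕ → ℝ)
    (hV : ∀ k, V k = ‖v k - ubar‖ ^ 2 - τ (k - 1) * ‖v (k - 1) - ubar‖ ^ 2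
        + lam (k - 1) * (1 - τ (k - 1)) * ‖v k - v (k - 1)‖ ^ 2) :
    ∀ k ≥ 1, V (k + 1) ≤ Q k * V k + 2 * θ k * ‖δ k‖ ^ 2 := by
  intro k hk
  -- scalar facts about θ, Q, lam, τ
  obtain ⟨hθl, hθu⟩ := hθ k
  have hθpos : 0 < θ k := lt_of_lt_of_le hθmin hθl
  have hθlt1 : θ k < 1 := lt_of_le_of_lt hθu hθmax
  have hQpos : 0 < Q k := by rw [hQ]; nlinarith
  have hQlt1 : Q k < 1 := lt_of_le_of_lt (hQb k) hQbar
  have hlamnn : 0 ≤ lam k := by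
    rw [hlam]; exact div_nonneg (by linarith) (le_of_lt hθpos)
  have hτk0 := hτ0 k
  have hτk1 : τ k < 1 := lt_of_le_of_lt (hτub k) hτbar
  have hτmon : τ (k - 1) ≤ τ k := hτmono (Nat.sub_le k 1)
  -- vector abbreviations
  set a : H := z k - ubar with ha
  set b : H := T (z k) + δ k - ubar with hb
  -- step 1: main contraction estimate on ‖v (k+1) - ubar‖²
  have hvk : v (k + 1) - ubar = (1 - θ k) • a + θ k • b := by
    rw [hv k hk, ha, hb]; module
  have hE : ‖v (k+1) - ubar‖^2
      = (1 - θ k) * ‖a‖^2 + θ k * ‖b‖^2 - θ k * (1 - θ k) * ‖a - b‖^2 := by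
    rw [hvk, comb_aux]
  -- ‖b‖² ≤ 2 q² ‖a‖² + 2 ‖δ k‖²
  have hbn : ‖b‖ ≤ q * ‖a‖ + ‖δ k‖ := by
    have h1 : b = (T (z k) - T ubar) + δ k := by rw [hb, hfix]; abel
    calc ‖b‖ ≤ ‖T (z k) - T ubar‖ + ‖δ k‖ := by rw [h1]; exact norm_add_le _ _
      _ ≤ q * ‖a‖ + ‖δ k‖ := by gcongr; exact hT _ _
  have hb2 : ‖b‖^2 ≤ 2 * q^2 * ‖a‖^2 + 2 * ‖δ k‖^2 := by
    have hbnn : (0:ℝ) ≤ ‖b‖ := norm_nonneg _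
    nlinarith [norm_nonneg a, norm_nonneg (δ k), sq_nonneg (q * ‖a‖ - ‖δ k‖)]
  -- v(k+1) - z k = θ k • (b - a)  hence  θ(1-θ)‖a-b‖² = lam k * ‖v(k+1) - z k‖²
  have hvz : v (k+1) - z k = θ k • (b - a) := by
    rw [hv k hk, ha, hb]; module
  have hW : ‖v (k+1) - z k‖^2 = θ k ^2 * ‖a - b‖^2 := by
    rw [hvz]
    rw [norm_smul, ← norm_neg (b - a)]
    have : -(b - a) = a - b := by abel
    rw [this, mul_pow, Real.norm_eq_abs, sq_abs]
  have hlamW : lam k * ‖v (k+1) - z k‖^2 = θ k * (1 - θ k) * ‖a - b‖^2 := by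
    rw [hW, hlam]; field_simp
  have key1 : ‖v (k+1) - ubar‖^2
      ≤ Q k * ‖a‖^2 + 2 * θ k * ‖δ k‖^2 - lam k * ‖v (k+1) - z k‖^2 := by
    rw [hE, hlamW, hQ]; nlinarith [hb2]
  -- step 2: expand ‖a‖² = ‖z k - ubar‖²
  have hza : a = (1 - (-τ k)) • (v k - ubar) + (-τ k) • (v (k-1) - ubar) := by
    rw [ha, hz k hk]; module
  have hZ : ‖a‖^2 = (1 + τ k) * ‖v k - ubar‖^2 - τ k * ‖v (k-1) - ubar‖^2
      + τ k * (1 + τ k) * ‖v k - v (k-1)‖^2 := by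
    rw [hza, comb_aux]
    have : (v k - ubar) - (v (k-1) - ubar) = v k - v (k-1) := by abel
    rw [this]; ring
  -- step 3: lower bound on ‖v(k+1) - z k‖²
  have hwz : v (k+1) - z k = (1 - τ k) • (v (k+1) - v k) + τ k • ((v (k+1) - v k) - (v k - v (k-1))) := by
    rw [hz k hk]; module
  have hWlb : ‖v (k+1) - z k‖^2
      ≥ (1 - τ k) * ‖v (k+1) - v k‖^2 - τ k * (1 - τ k) * ‖v k - v (k-1)‖^2 := by
    rw [hwz, comb_aux]
    have : (v (k+1) - v k) - ((v (k+1) - v k) - (v k - v (k-1))) = v k - v (k-1) := by abel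
    rw [this]
    have hx : 0 ≤ τ k * ‖(v (k+1) - v k) - (v k - v (k-1))‖^2 := by positivity
    linarith [hx]
  -- assemble
  have hVk1 : V (k+1) = ‖v (k+1) - ubar‖^2 - τ k * ‖v k - ubar‖^2
      + lam k * (1 - τ k) * ‖v (k+1) - v k‖^2 := by
    rw [hV (k+1)]; norm_num
  have hVk := hV k
  have hp := hparam k hk
  have hlamWlb : lam k * ‖v (k+1) - z k‖^2
      ≥ lam k * ((1 - τ k) * ‖v (k+1) - v k‖^2 - τ k * (1 - τ k) * ‖v k - v (k-1)‖^2) :=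
    mul_le_mul_of_nonneg_left hWlb hlamnn
  have hfin : V (k+1) - (Q k * V k + 2 * θ k * ‖δ k‖^2)
      ≤ (Q k - 1) * τ k * ‖v k - ubar‖^2
        + Q k * (τ (k-1) - τ k) * ‖v (k-1) - ubar‖^2
        + (Q k * τ k * (1 + τ k) + lam k * τ k * (1 - τ k)
            - Q k * lam (k-1) * (1 - τ (k-1))) * ‖v k - v (k-1)‖^2 := by
    have h2 : Q k * ‖a‖^2 = Q k * (1 + τ k) * ‖v k - ubar‖^2
        - Q k * τ k * ‖v (k-1) - ubar‖^2
        + Q k * τ k * (1 + τ k) * ‖v k - v (k-1)‖^2 := by rw [hZ]; ring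
    have h3 : lam k * ‖v (k+1) - z k‖^2
        ≥ lam k * (1 - τ k) * ‖v (k+1) - v k‖^2
          - lam k * τ k * (1 - τ k) * ‖v k - v (k-1)‖^2 := by
      linarith [hlamWlb]
    rw [hVk1, hVk]
    linarith [key1, h2, h3]
  have t1 : (Q k - 1) * τ k * ‖v k - ubar‖^2 ≤ 0 :=
    mul_nonpos_of_nonpos_of_nonneg (mul_nonpos_of_nonpos_of_nonneg (by linarith) hτk0) (sq_nonneg _)
  have t2 : Q k * (τ (k-1) - τ k) * ‖v (k-1) - ubar‖^2 ≤ 0 :=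
    mul_nonpos_of_nonpos_of_nonneg (mul_nonpos_of_nonneg_of_nonpos (le_of_lt hQpos) (by linarith)) (sq_nonneg _)
  have t3 : (Q k * τ k * (1 + τ k) + lam k * τ k * (1 - τ k)
      - Q k * lam (k-1) * (1 - τ (k-1))) * ‖v k - v (k-1)‖^2 ≤ 0 :=
    mul_nonpos_of_nonpos_of_nonneg hp (sq_nonneg _)
  linarith
end
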